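/- Let r be an integer, let (c_n)_{n∈ℤ} be the integer sequence defined by c_n = r·c_{n−1} − c_{n−2} with c_1 = 0 and c_2 = 1, and let p, q be nonnegative integers. Setting A_i = p·c_{i+1} + q·c_i for i ∈ ℤ, we have A_i² − A_{i+1}·A_{i−1} = p² + q² + r·p·q for every integer i. -/

import Mathlib

/-- **Lemma 3.9(b) (Lee–Schiffler).** With `c` the Chebyshev-like sequence and
`A i = p * c (i+1) + q * c i` for nonnegative integers `p, q`, one has
`A i ^ 2 - A (i+1) * A (i-1) = p^2 + q^2 + r*p*q` for every integer `i`. -/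
theorem A_determinant_identity (r : ℤ) (c : ℤ → ℤ)
    (hc1 : c 1 = 0) (hc2 : c 2 = 1)
    (hrec : ∀ n : ℤ, c n = r * c (n - 1) - c (n - 2))
    (p q : ℕ) (A : ℤ → ℤ)
    (hA : ∀ i : ℤ, A i = (p : ℤ) * c (i + 1) + (q : ℤ) * c i) :
    ∀ i : ℤ, A i ^ 2 - A (i + 1) * A (i - 1)
      = (p : ℤ) ^ 2 + (q : ℤ) ^ 2 + r * p * q := by
  have hc0 : c 0 = -1 := by
    have h := hrec 2
    norm_num [hc1, hc2] at h
    linarith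
  have step : ∀ i : ℤ, c (i + 1) = r * c i - c (i - 1) := by
    intro i
    have h := hrec (i + 1)
    have e1 : i + 1 - 1 = i := by ring
    have e2 : i + 1 - 2 = i - 1 := by ring
    rw [e1, e2] at h
    exact h
  have hG : ∀ i : ℤ, c (i + 1) ^ 2 - r * c (i + 1) * c i + c i ^ 2 = 1 := by
    intro i
    induction i using Int.induction_on with
    | zero => simp [hc1, hc0]
    | succ k ih =>
      have h := step (k + 1)
      have e1 : (k : ℤ) + 1 - 1 = k := by ring
      rw [e1] at h
      linear_combination ih + (c (k + 1 + 1) - c k) * h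
    | pred k ih =>
      have h := step (-k)
      have e1 : (-k : ℤ) - 1 + 1 = -k := by ring
      rw [e1]
      linear_combination ih - (c (-k + 1) - c (-k - 1)) * h
  intro i
  have hz := step i
  have hw := step (i + 1)
  have e1 : i + 1 - 1 = i := by ring
  rw [e1] at hw
  have hG' := hG (i - 1)
  have e2 : i - 1 + 1 = i := by ring
  rw [e2] at hG'
  rw [hA i, hA (i + 1), hA (i - 1), e2, hw, hz]
  linear_combination ((p : ℤ) ^ 2 + (q : ℤ) ^ 2 + r * p * q) * hG'
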